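/- Let n ≥ 2d be positive integers with d ≥ 1, let β be a real number with β ≤ n/4 and β² ≥ 2dn, and let A ∈ 𝒜_{n,d} be β-delocalized with rank A ≤ n−1. Then the number of quadruples (i,j,k,ℓ) ∈ F_A such that the matrix Ā obtained from A by the switching in (i,j,k,ℓ) satisfies rank Ā = rank A + 1 is at least n(n − 3β)d². -/

import Mathlib

open Matrix

/-- `𝒜_{n,d}`: 0/1 matrices with exactly `d` ones in every row and column. -/
def IsRegAdj (n d : ℕ) (A : Matrix (Fin n) (Fin n) ℝ) : Prop :=
  (∀ i j, A i j = 0 ∨ A i j = 1) ∧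
  (∀ i, {j : Fin n | A i j = 1}.ncard = d) ∧
  (∀ j, {i : Fin n | A i j = 1}.ncard = d)

/-- A simple switching can be performed in `(i, j, k, l)`. -/
def CanSwitch {n : ℕ} (A : Matrix (Fin n) (Fin n) ℝ) (i j k l : Fin n) : Prop :=
  A i k = 1 ∧ A j l = 1 ∧ A i l = 0 ∧ A j k = 0

/-- The matrix obtained from `A` by the simple switching in `(i, j, k, l)`. -/
def switch {n : ℕ} (A : Matrix (Fin n) (Fin n) ℝ) (i j k l : Fin n) :
    Matrix (Fin n) (Fin n) ℝ :=
  Matrix.of fun s t =>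
    if (s = i ∧ t = k) ∨ (s = j ∧ t = l) then 0
    else if (s = i ∧ t = l) ∨ (s = j ∧ t = k) then 1
    else A s t

/-- `F_{i,j}(A)`: the span of the rows of `A` other than the `i`-th and the `j`-th,
together with `R_i + R_j`. -/
def rowSpanF {n : ℕ} (A : Matrix (Fin n) (Fin n) ℝ) (i j : Fin n) :
    Submodule ℝ (Fin n → ℝ) :=
  Submodule.span ℝ (insert (A i + A j) {r : Fin n → ℝ | ∃ s, s ≠ i ∧ s ≠ j ∧ r = A s})

/-- Orthogonal complement w.r.t. the standard inner product on `ℝⁿ`. -/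
def perp {n : ℕ} (F : Submodule ℝ (Fin n → ℝ)) : Submodule ℝ (Fin n → ℝ) where
  carrier := {x | ∀ v ∈ F, v ⬝ᵥ x = 0}
  zero_mem' := by intro v hv; simp
  add_mem' := by intro a b ha hb v hv; simp [dotProduct_add, ha v hv, hb v hv]
  smul_mem' := by intro c x hx v hv; simp [dotProduct_smul, hx v hv]

/-- `A` is `β`-delocalized: no level set of a nonzero null vector (of `A` or `Aᵀ`)
has more than `β` coordinates. -/
def Delocalized {n : ℕ} (β : ℝ) (A : Matrix (Fin n) (Fin n) ℝ) : Prop :=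
  ∀ x : Fin n → ℝ, x ≠ 0 →
    (x ∈ LinearMap.ker A.mulVecLin ∨ x ∈ LinearMap.ker Aᵀ.mulVecLin) →
    ∀ lam : ℝ, ({i : Fin n | x i = lam}.ncard : ℝ) ≤ β

/- ### Auxiliary lemmas -/

lemma aux_mulVec_add_vecMulVec {n : ℕ} (A : Matrix (Fin n) (Fin n) ℝ) (u v z : Fin n → ℝ) :
    (A + vecMulVec u v) *ᵥ z = A *ᵥ z + (v ⬝ᵥ z) • u := by
  funext s
  simp only [mulVec, dotProduct, vecMulVec, Matrix.add_apply, Pi.add_apply, Pi.smul_apply,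
    smul_eq_mul, of_apply, Finset.mul_sum]
  rw [Finset.sum_mul, ← Finset.sum_add_distrib]
  exact Finset.sum_congr rfl fun t _ => by ring

lemma aux_rank_add_one {n : ℕ} (A : Matrix (Fin n) (Fin n) ℝ) (u v x y : Fin n → ℝ)
    (hx : A *ᵥ x = 0) (hy : Aᵀ *ᵥ y = 0) (hvx : v ⬝ᵥ x ≠ 0) (hyu : y ⬝ᵥ u ≠ 0) :
    (A + vecMulVec u v).rank = A.rank + 1 := by
  have hunr : u ∉ LinearMap.range A.mulVecLin := by
    rintro ⟨z, rfl⟩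
    apply hyu
    simp only [mulVecLin_apply]
    rw [Matrix.dotProduct_mulVec, ← Matrix.mulVec_transpose, hy, zero_dotProduct]
  have hu0 : u ≠ 0 := by rintro rfl; simp at hyu
  have hrange : LinearMap.range (A + vecMulVec u v).mulVecLin
      = LinearMap.range A.mulVecLin ⊔ Submodule.span ℝ {u} := by
    have humem : u ∈ LinearMap.range (A + vecMulVec u v).mulVecLin := by
      refine ⟨(v ⬝ᵥ x)⁻¹ • x, ?_⟩
      simp only [mulVecLin_apply, Matrix.mulVec_smul, aux_mulVec_add_vecMulVec, hx, zero_add]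
      rw [smul_smul, inv_mul_cancel₀ hvx, one_smul]
    apply le_antisymm
    · rintro w ⟨z, rfl⟩
      simp only [mulVecLin_apply, aux_mulVec_add_vecMulVec]
      exact Submodule.add_mem _ (Submodule.mem_sup_left ⟨z, rfl⟩)
        (Submodule.mem_sup_right (Submodule.smul_mem _ _ (Submodule.mem_span_singleton_self u)))
    · refine sup_le ?_ ?_
      · rintro w ⟨z, rfl⟩
        have : A *ᵥ z = (A + vecMulVec u v) *ᵥ z - (v ⬝ᵥ z) • u := by
          rw [aux_mulVec_add_vecMulVec]; abel
        simp only [mulVecLin_apply, this]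
        exact Submodule.sub_mem _ ⟨z, rfl⟩ (Submodule.smul_mem _ _ humem)
      · rw [Submodule.span_singleton_le_iff_mem]; exact humem
  have hinf : LinearMap.range A.mulVecLin ⊓ Submodule.span ℝ {u} = ⊥ := by
    rw [Submodule.eq_bot_iff]
    rintro w ⟨hw1, hw2⟩
    rcases Submodule.mem_span_singleton.mp hw2 with ⟨c, rfl⟩
    rcases eq_or_ne c 0 with rfl | hc
    · simp
    · exfalso
      apply hunr
      have := (LinearMap.range A.mulVecLin).smul_mem c⁻¹ hw1
      rwa [smul_smul, inv_mul_cancel₀ hc, one_smul] at this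
  rw [Matrix.rank, Matrix.rank, hrange]
  have := Submodule.finrank_sup_add_finrank_inf_eq (LinearMap.range A.mulVecLin)
    (Submodule.span ℝ {u})
  rw [hinf, finrank_span_singleton hu0] at this
  simpa using this

lemma aux_switch_eq {n : ℕ} (A : Matrix (Fin n) (Fin n) ℝ) (i j k l : Fin n)
    (h : CanSwitch A i j k l) :
    switch A i j k l = A + vecMulVec ((Pi.single i 1 : Fin n → ℝ) - Pi.single j 1)
      ((Pi.single l 1 : Fin n → ℝ) - Pi.single k 1) := by
  obtain ⟨h1, h2, h3, h4⟩ := h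
  have hij : i ≠ j := fun e => by rw [e] at h1; rw [h1] at h4; norm_num at h4
  have hkl : k ≠ l := fun e => by rw [e] at h1; rw [h1] at h3; norm_num at h3
  funext s t
  simp only [switch, of_apply, Matrix.add_apply, vecMulVec_apply, Pi.sub_apply,
    Pi.single_apply]
  rcases eq_or_ne s i with rfl | hsi <;> rcases eq_or_ne s j with rfl | hsj <;>
    rcases eq_or_ne t k with rfl | htk <;> rcases eq_or_ne t l with rfl | htl <;>
    simp_all

lemma aux_key3 {M : Type*} [AddCommMonoid M] {n : ℕ} (F : Fin n → Fin n → Fin n → M) :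
    ∑ a, ∑ b, ∑ c, F a b c = ∑ b, ∑ c, ∑ a, F a b c := by
  rw [Finset.sum_comm]
  exact Finset.sum_congr rfl fun b _ => Finset.sum_comm

lemma aux_key4 {M : Type*} [AddCommMonoid M] {n : ℕ} (F : Fin n → Fin n → Fin n → Fin n → M) :
    ∑ i, ∑ j, ∑ k, ∑ l, F i j k l = ∑ k, ∑ l, ∑ i, ∑ j, F i j k l :=
  calc ∑ i, ∑ j, ∑ k, ∑ l, F i j k l
      = ∑ i, ∑ k, ∑ j, ∑ l, F i j k l := Finset.sum_congr rfl fun i _ => Finset.sum_comm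
    _ = ∑ k, ∑ i, ∑ j, ∑ l, F i j k l := Finset.sum_comm
    _ = ∑ k, ∑ i, ∑ l, ∑ j, F i j k l :=
        Finset.sum_congr rfl fun k _ => Finset.sum_congr rfl fun i _ => Finset.sum_comm
    _ = ∑ k, ∑ l, ∑ i, ∑ j, F i j k l := Finset.sum_congr rfl fun k _ => Finset.sum_comm

section counts
variable {n d : ℕ} (f : Fin n → Fin n → ℕ)

lemma aux_countP (hrow : ∀ i, ∑ k, f i k = d) :
    ∑ i, ∑ j : Fin n, ∑ k, ∑ l, f i k * f j l = n * n * (d * d) := by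
  have : ∀ i j : Fin n, ∑ k, ∑ l, f i k * f j l = d * d := by
    intro i j
    rw [← Finset.sum_mul_sum, hrow, hrow]
  simp [this, Finset.sum_const, mul_assoc]

lemma aux_countB1 (hrow : ∀ i, ∑ k, f i k = d) (hcol : ∀ k, ∑ i, f i k = d) :
    ∑ i, ∑ j : Fin n, ∑ k, ∑ l, f i k * f j l * f i l = n * (d * d * d) := by
  have step : ∀ i : Fin n, ∑ j, ∑ k, ∑ l, f i k * f j l * f i l = d * d * d := by
    intro i
    rw [aux_key3]
    have inner : ∀ k l : Fin n, ∑ j, f i k * f j l * f i l = f i k * f i l * d := by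
      intro k l
      calc ∑ j, f i k * f j l * f i l = ∑ j, f i k * f i l * f j l :=
            Finset.sum_congr rfl fun j _ => by ring
        _ = f i k * f i l * ∑ j, f j l := by rw [Finset.mul_sum]
        _ = f i k * f i l * d := by rw [hcol]
    simp only [inner]
    calc ∑ k, ∑ l, f i k * f i l * d = (∑ k, ∑ l, f i k * f i l) * d := by
          rw [Finset.sum_mul]; exact Finset.sum_congr rfl fun k _ => by rw [Finset.sum_mul]
      _ = d * d * d := by rw [← Finset.sum_mul_sum, hrow]
  simp [step, Finset.sum_const]

lemma aux_countB2 (hrow : ∀ i, ∑ k, f i k = d) (hcol : ∀ k, ∑ i, f i k = d) :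
    ∑ i, ∑ j : Fin n, ∑ k, ∑ l, f i k * f j l * f j k = n * (d * d * d) := by
  calc ∑ i, ∑ j : Fin n, ∑ k, ∑ l, f i k * f j l * f j k
      = ∑ j, ∑ i : Fin n, ∑ k, ∑ l, f i k * f j l * f j k := Finset.sum_comm
    _ = ∑ j, ∑ k, ∑ l, ∑ i : Fin n, f i k * f j l * f j k :=
        Finset.sum_congr rfl fun j _ => aux_key3 _
    _ = ∑ j, ∑ k, ∑ l, d * (f j l * f j k) := by
        refine Finset.sum_congr rfl fun j _ => Finset.sum_congr rfl fun k _ =>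
          Finset.sum_congr rfl fun l _ => ?_
        calc ∑ i, f i k * f j l * f j k = ∑ i, f i k * (f j l * f j k) :=
              Finset.sum_congr rfl fun i _ => by ring
          _ = (∑ i, f i k) * (f j l * f j k) := by rw [Finset.sum_mul]
          _ = d * (f j l * f j k) := by rw [hcol]
    _ = n * (d * d * d) := by
        have : ∀ j : Fin n, ∑ k, ∑ l, d * (f j l * f j k) = d * d * d := by
          intro j
          calc ∑ k, ∑ l, d * (f j l * f j k)
              = ∑ k, d * ((∑ l, f j l) * f j k) := by
                refine Finset.sum_congr rfl fun k _ => ?_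
                rw [← Finset.mul_sum, ← Finset.sum_mul]
            _ = ∑ k, d * (d * f j k) := by rw [hrow]
            _ = d * (d * ∑ k, f j k) := by rw [Finset.mul_sum, Finset.mul_sum]
            _ = d * d * d := by rw [hrow]; ring
        simp [this, Finset.sum_const]
end counts

section counts2
variable {n d : ℕ} (f : Fin n → Fin n → ℕ)

lemma aux_countB3 (e : Fin n → Fin n → ℕ) (hrowcol : ∀ k, ∑ i, f i k = d) :
    ∑ i, ∑ j : Fin n, ∑ k, ∑ l, f i k * f j l * e k l = d * d * ∑ k, ∑ l, e k l := by
  rw [aux_key4]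
  have inner : ∀ k l : Fin n, ∑ i, ∑ j, f i k * f j l * e k l = d * d * e k l := by
    intro k l
    calc ∑ i, ∑ j, f i k * f j l * e k l
        = ∑ i, f i k * ((∑ j, f j l) * e k l) := by
          refine Finset.sum_congr rfl fun i _ => ?_
          rw [Finset.sum_mul, Finset.mul_sum]
          exact Finset.sum_congr rfl fun j _ => by ring
      _ = (∑ i, f i k) * ((∑ j, f j l) * e k l) := (Finset.sum_mul _ _ _).symm
      _ = d * d * e k l := by rw [hrowcol, hrowcol]; ring
  simp only [inner, ← Finset.mul_sum]

lemma aux_countB4 (e : Fin n → Fin n → ℕ) (hrow : ∀ i, ∑ k, f i k = d) :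
    ∑ i, ∑ j : Fin n, ∑ k, ∑ l, f i k * f j l * e i j = d * d * ∑ i, ∑ j, e i j := by
  have inner : ∀ i j : Fin n, ∑ k, ∑ l, f i k * f j l * e i j = d * d * e i j := by
    intro i j
    calc ∑ k, ∑ l, f i k * f j l * e i j
        = ∑ k, f i k * ((∑ l, f j l) * e i j) := by
          refine Finset.sum_congr rfl fun k _ => ?_
          rw [Finset.sum_mul, Finset.mul_sum]
          exact Finset.sum_congr rfl fun l _ => by ring
      _ = (∑ k, f i k) * ((∑ l, f j l) * e i j) := (Finset.sum_mul _ _ _).symm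
      _ = d * d * e i j := by rw [hrow, hrow]; ring
  simp only [inner, ← Finset.mul_sum]
end counts2

/-- at least `n (n - 3β) d²` switchings increase the rank by one. -/
theorem stmt_11 (n d : ℕ) (hd : 1 ≤ d) (hn : 2 * d ≤ n) (β : ℝ)
    (hβ : β ≤ n / 4) (hβ2 : 2 * d * n ≤ β ^ 2)
    (A : Matrix (Fin n) (Fin n) ℝ) (hA : IsRegAdj n d A)
    (hdel : Delocalized β A) (hrk : A.rank ≤ n - 1) :
    (n : ℝ) * ((n : ℝ) - 3 * β) * d ^ 2 ≤
      ({q : Fin n × Fin n × Fin n × Fin n |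
          CanSwitch A q.1 q.2.1 q.2.2.1 q.2.2.2 ∧
          (switch A q.1 q.2.1 q.2.2.1 q.2.2.2).rank = A.rank + 1}.ncard : ℝ) := by
  classical
  obtain ⟨hA1, hA2, hA3⟩ := hA
  have hn2 : 2 ≤ n := by omega
  have hrkn : A.rank < n := by omega
  -- kernel vectors
  obtain ⟨x, hxmem, hx0⟩ : ∃ x, x ∈ LinearMap.ker A.mulVecLin ∧ x ≠ 0 := by
    have hne : LinearMap.ker A.mulVecLin ≠ ⊥ := by
      intro h
      have := LinearMap.finrank_range_add_finrank_ker A.mulVecLin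
      rw [h, finrank_bot] at this
      have hfr : Module.finrank ℝ (Fin n → ℝ) = n := by simp
      rw [hfr] at this
      rw [Matrix.rank] at hrkn
      omega
    obtain ⟨x, h1, h2⟩ := Submodule.exists_mem_ne_zero_of_ne_bot hne
    exact ⟨x, h1, h2⟩
  obtain ⟨y, hymem, hy0⟩ : ∃ y, y ∈ LinearMap.ker Aᵀ.mulVecLin ∧ y ≠ 0 := by
    have hrkt : Aᵀ.rank < n := by rw [Matrix.rank_transpose]; omega
    have hne : LinearMap.ker Aᵀ.mulVecLin ≠ ⊥ := by
      intro h
      have := LinearMap.finrank_range_add_finrank_ker Aᵀ.mulVecLin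
      rw [h, finrank_bot] at this
      have hfr : Module.finrank ℝ (Fin n → ℝ) = n := by simp
      rw [hfr] at this
      rw [Matrix.rank] at hrkt
      omega
    obtain ⟨y, h1, h2⟩ := Submodule.exists_mem_ne_zero_of_ne_bot hne
    exact ⟨y, h1, h2⟩
  have hx : A *ᵥ x = 0 := hxmem
  have hy : Aᵀ *ᵥ y = 0 := hymem
  -- β ≥ 1
  have hβ1 : (1:ℝ) ≤ β := by
    have i0 : Fin n := ⟨0, by omega⟩
    have hle := hdel x hx0 (Or.inl hxmem) (x i0)
    have hpos : 0 < {i : Fin n | x i = x i0}.ncard := by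
      rw [Set.ncard_pos (Set.toFinite _)]
      exact ⟨i0, rfl⟩
    have : (1:ℝ) ≤ ({i : Fin n | x i = x i0}.ncard : ℝ) := by exact_mod_cast hpos
    linarith
  -- 2d ≤ β
  have hnR : (2:ℝ) ≤ (n:ℝ) := by exact_mod_cast hn2
  have hdR : (1:ℝ) ≤ (d:ℝ) := by exact_mod_cast hd
  have hdn : 2 * (d:ℝ) * (n:ℝ) ≤ β ^ 2 := by exact_mod_cast hβ2
  have h2d : 2 * (d:ℝ) ≤ β := by nlinarith
  -- indicator functions
  set f : Fin n → Fin n → ℕ := fun i k => if A i k = 1 then 1 else 0 with hf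
  set e1 : Fin n → Fin n → ℕ := fun k l => if x l = x k then 1 else 0 with he1
  set e2 : Fin n → Fin n → ℕ := fun i j => if y j = y i then 1 else 0 with he2
  have hrow : ∀ i, ∑ k, f i k = d := by
    intro i
    have h := hA2 i
    rw [Set.ncard_eq_toFinset_card', Set.toFinset_setOf, Finset.card_filter] at h
    exact h
  have hcol : ∀ k, ∑ i, f i k = d := by
    intro k
    have h := hA3 k
    rw [Set.ncard_eq_toFinset_card', Set.toFinset_setOf, Finset.card_filter] at h
    exact h
  -- level set bounds
  have hesum1 : ((∑ k, ∑ l, e1 k l : ℕ) : ℝ) ≤ n * β := by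
    push_cast
    calc ∑ k : Fin n, ∑ l : Fin n, ((e1 k l : ℝ))
        ≤ ∑ k : Fin n, β := by
          refine Finset.sum_le_sum fun k _ => ?_
          have hle := hdel x hx0 (Or.inl hxmem) (x k)
          rw [Set.ncard_eq_toFinset_card', Set.toFinset_setOf, Finset.card_filter] at hle
          calc ∑ l : Fin n, ((e1 k l : ℝ))
              = ((∑ l : Fin n, e1 k l : ℕ) : ℝ) := by push_cast; ring
            _ ≤ β := by exact_mod_cast hle
      _ = n * β := by rw [Finset.sum_const]; simp [nsmul_eq_mul]
  have hesum2 : ((∑ i, ∑ j, e2 i j : ℕ) : ℝ) ≤ n * β := by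
    push_cast
    calc ∑ i : Fin n, ∑ j : Fin n, ((e2 i j : ℝ))
        ≤ ∑ i : Fin n, β := by
          refine Finset.sum_le_sum fun i _ => ?_
          have hle := hdel y hy0 (Or.inr hymem) (y i)
          rw [Set.ncard_eq_toFinset_card', Set.toFinset_setOf, Finset.card_filter] at hle
          calc ∑ j : Fin n, ((e2 i j : ℝ))
              = ((∑ j : Fin n, e2 i j : ℕ) : ℝ) := by push_cast; ring
            _ ≤ β := by exact_mod_cast hle
      _ = n * β := by rw [Finset.sum_const]; simp [nsmul_eq_mul]
  -- predicates
  set Q := Fin n × Fin n × Fin n × Fin n with hQ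
  set pS : Q → Prop := fun q => CanSwitch A q.1 q.2.1 q.2.2.1 q.2.2.2 ∧
    (switch A q.1 q.2.1 q.2.2.1 q.2.2.2).rank = A.rank + 1 with hpS
  set pT : Q → Prop := fun q => A q.1 q.2.2.1 = 1 ∧ A q.2.1 q.2.2.2 = 1 ∧
    A q.1 q.2.2.2 = 0 ∧ A q.2.1 q.2.2.1 = 0 ∧ ¬(x q.2.2.2 = x q.2.2.1) ∧
    ¬(y q.2.1 = y q.1) with hpT
  set pP : Q → Prop := fun q => A q.1 q.2.2.1 = 1 ∧ A q.2.1 q.2.2.2 = 1 with hpP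
  set pB1 : Q → Prop := fun q => A q.1 q.2.2.1 = 1 ∧ A q.2.1 q.2.2.2 = 1 ∧
    A q.1 q.2.2.2 = 1 with hpB1
  set pB2 : Q → Prop := fun q => A q.1 q.2.2.1 = 1 ∧ A q.2.1 q.2.2.2 = 1 ∧
    A q.2.1 q.2.2.1 = 1 with hpB2
  set pB3 : Q → Prop := fun q => A q.1 q.2.2.1 = 1 ∧ A q.2.1 q.2.2.2 = 1 ∧
    x q.2.2.2 = x q.2.2.1 with hpB3
  set pB4 : Q → Prop := fun q => A q.1 q.2.2.1 = 1 ∧ A q.2.1 q.2.2.2 = 1 ∧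
    y q.2.1 = y q.1 with hpB4
  -- card as quadruple sums
  have cardeq : ∀ (p : Q → Prop) [DecidablePred p], (Finset.univ.filter p).card
      = ∑ i, ∑ j, ∑ k, ∑ l, if p (i, j, k, l) then 1 else 0 := by
    intro p _
    rw [Finset.card_filter]
    rw [Fintype.sum_prod_type]
    refine Finset.sum_congr rfl fun i _ => ?_
    rw [Fintype.sum_prod_type]
    refine Finset.sum_congr rfl fun j _ => ?_
    rw [Fintype.sum_prod_type]
  -- counts
  have hcardP : (Finset.univ.filter pP).card = n * n * (d * d) := by
    rw [cardeq pP]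
    have : ∀ i j k l : Fin n, (if pP (i, j, k, l) then 1 else 0) = f i k * f j l := by
      intro i j k l
      by_cases h1 : A i k = 1 <;> by_cases h2 : A j l = 1 <;> simp [hpP, hf, h1, h2]
    simp only [this]
    exact aux_countP f hrow
  have hcardB1 : (Finset.univ.filter pB1).card = n * (d * d * d) := by
    rw [cardeq pB1]
    have : ∀ i j k l : Fin n, (if pB1 (i, j, k, l) then 1 else 0) = f i k * f j l * f i l := by
      intro i j k l
      by_cases h1 : A i k = 1 <;> by_cases h2 : A j l = 1 <;> by_cases h3 : A i l = 1 <;>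
        simp [hpB1, hf, h1, h2, h3]
    simp only [this]
    exact aux_countB1 f hrow hcol
  have hcardB2 : (Finset.univ.filter pB2).card = n * (d * d * d) := by
    rw [cardeq pB2]
    have : ∀ i j k l : Fin n, (if pB2 (i, j, k, l) then 1 else 0) = f i k * f j l * f j k := by
      intro i j k l
      by_cases h1 : A i k = 1 <;> by_cases h2 : A j l = 1 <;> by_cases h3 : A j k = 1 <;>
        simp [hpB2, hf, h1, h2, h3]
    simp only [this]
    exact aux_countB2 f hrow hcol
  have hcardB3 : (Finset.univ.filter pB3).card = d * d * ∑ k, ∑ l, e1 k l := by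
    rw [cardeq pB3]
    have : ∀ i j k l : Fin n, (if pB3 (i, j, k, l) then 1 else 0) = f i k * f j l * e1 k l := by
      intro i j k l
      by_cases h1 : A i k = 1 <;> by_cases h2 : A j l = 1 <;> by_cases h3 : x l = x k <;>
        simp [hpB3, hf, he1, h1, h2, h3]
    simp only [this]
    exact aux_countB3 f e1 hcol
  have hcardB4 : (Finset.univ.filter pB4).card = d * d * ∑ i, ∑ j, e2 i j := by
    rw [cardeq pB4]
    have : ∀ i j k l : Fin n, (if pB4 (i, j, k, l) then 1 else 0) = f i k * f j l * e2 i j := by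
      intro i j k l
      by_cases h1 : A i k = 1 <;> by_cases h2 : A j l = 1 <;> by_cases h3 : y j = y i <;>
        simp [hpB4, hf, he2, h1, h2, h3]
    simp only [this]
    exact aux_countB4 f e2 hrow
  -- T ⊆ S
  have hTS : Finset.univ.filter pT ⊆ Finset.univ.filter pS := by
    intro q hq
    rw [Finset.mem_filter] at hq ⊢
    obtain ⟨-, h1, h2, h3, h4, h5, h6⟩ := hq
    refine ⟨Finset.mem_univ _, ?_⟩
    obtain ⟨i, j, k, l⟩ := q
    have hc : CanSwitch A i j k l := ⟨h1, h2, h3, h4⟩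
    refine ⟨hc, ?_⟩
    rw [aux_switch_eq A i j k l hc]
    refine aux_rank_add_one A _ _ x y hx hy ?_ ?_
    · rw [sub_dotProduct, single_dotProduct, single_dotProduct]
      simp only [one_mul]
      exact sub_ne_zero_of_ne h5
    · rw [dotProduct_sub, dotProduct_single, dotProduct_single]
      simp only [mul_one]
      intro hcon
      exact h6 (by linarith [sub_eq_zero.mp hcon])
  -- P ⊆ T ∪ B1 ∪ B2 ∪ B3 ∪ B4
  have hsub : Finset.univ.filter pP ⊆
      Finset.univ.filter pT ∪ Finset.univ.filter pB1 ∪ Finset.univ.filter pB2 ∪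
        Finset.univ.filter pB3 ∪ Finset.univ.filter pB4 := by
    intro q hq
    rw [Finset.mem_filter] at hq
    obtain ⟨-, h1, h2⟩ := hq
    simp only [Finset.mem_union, Finset.mem_filter, Finset.mem_univ, true_and]
    by_cases b1 : A q.1 q.2.2.2 = 1
    · exact Or.inl (Or.inl (Or.inl (Or.inr ⟨h1, h2, b1⟩)))
    by_cases b2 : A q.2.1 q.2.2.1 = 1
    · exact Or.inl (Or.inl (Or.inr ⟨h1, h2, b2⟩))
    by_cases b3 : x q.2.2.2 = x q.2.2.1
    · exact Or.inl (Or.inr ⟨h1, h2, b3⟩)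
    by_cases b4 : y q.2.1 = y q.1
    · exact Or.inr ⟨h1, h2, b4⟩
    · refine Or.inl (Or.inl (Or.inl (Or.inl ⟨h1, h2, ?_, ?_, b3, b4⟩)))
      · rcases hA1 q.1 q.2.2.2 with h | h
        · exact h
        · exact absurd h b1
      · rcases hA1 q.2.1 q.2.2.1 with h | h
        · exact h
        · exact absurd h b2
  -- card inequality
  have hcards : (Finset.univ.filter pP).card ≤ (Finset.univ.filter pT).card +
      (Finset.univ.filter pB1).card + (Finset.univ.filter pB2).card +
      (Finset.univ.filter pB3).card + (Finset.univ.filter pB4).card := by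
    calc (Finset.univ.filter pP).card
        ≤ (Finset.univ.filter pT ∪ Finset.univ.filter pB1 ∪ Finset.univ.filter pB2 ∪
            Finset.univ.filter pB3 ∪ Finset.univ.filter pB4).card := Finset.card_le_card hsub
      _ ≤ (Finset.univ.filter pT ∪ Finset.univ.filter pB1 ∪ Finset.univ.filter pB2 ∪
            Finset.univ.filter pB3).card + (Finset.univ.filter pB4).card :=
          Finset.card_union_le _ _
      _ ≤ ((Finset.univ.filter pT ∪ Finset.univ.filter pB1 ∪ Finset.univ.filter pB2).card +
            (Finset.univ.filter pB3).card) + (Finset.univ.filter pB4).card := by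
          gcongr
          exact Finset.card_union_le _ _
      _ ≤ (((Finset.univ.filter pT ∪ Finset.univ.filter pB1).card +
            (Finset.univ.filter pB2).card) + (Finset.univ.filter pB3).card) +
            (Finset.univ.filter pB4).card := by
          gcongr
          exact Finset.card_union_le _ _
      _ ≤ ((((Finset.univ.filter pT).card + (Finset.univ.filter pB1).card) +
            (Finset.univ.filter pB2).card) + (Finset.univ.filter pB3).card) +
            (Finset.univ.filter pB4).card := by
          gcongr
          exact Finset.card_union_le _ _
  -- convert goal
  have hncard : ({q : Q | pS q}.ncard : ℝ) = ((Finset.univ.filter pS).card : ℝ) := by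
    rw [Set.ncard_eq_toFinset_card', Set.toFinset_setOf]
  have hgoal : ((Finset.univ.filter pT).card : ℝ) ≤ ((Finset.univ.filter pS).card : ℝ) := by
    exact_mod_cast Finset.card_le_card hTS
  rw [show {q : Q | CanSwitch A q.1 q.2.1 q.2.2.1 q.2.2.2 ∧
      (switch A q.1 q.2.1 q.2.2.1 q.2.2.2).rank = A.rank + 1} = {q : Q | pS q} from rfl, hncard]
  -- final arithmetic
  have hcardsR : ((n:ℝ) * n * (d * d)) ≤ ((Finset.univ.filter pT).card : ℝ) +
      (n * (d * d * d)) + (n * (d * d * d)) + ((d:ℝ) * d * ((∑ k, ∑ l, e1 k l : ℕ) : ℝ)) +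
      ((d:ℝ) * d * ((∑ i, ∑ j, e2 i j : ℕ) : ℝ)) := by
    have := hcards
    rw [hcardP, hcardB1, hcardB2, hcardB3, hcardB4] at this
    exact_mod_cast this
  have hE1 : (d:ℝ) * d * ((∑ k, ∑ l, e1 k l : ℕ) : ℝ) ≤ (d:ℝ) * d * ((n:ℝ) * β) :=
    mul_le_mul_of_nonneg_left hesum1 (by positivity)
  have hE2 : (d:ℝ) * d * ((∑ i, ∑ j, e2 i j : ℕ) : ℝ) ≤ (d:ℝ) * d * ((n:ℝ) * β) :=
    mul_le_mul_of_nonneg_left hesum2 (by positivity)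
  have hslack : (0:ℝ) ≤ (n:ℝ) * ((d:ℝ) * d) * (β - 2 * d) := by
    apply mul_nonneg (by positivity)
    linarith
  nlinarith [hcardsR, hE1, hE2, hslack, hgoal]
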